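/- In the setting of the eigenvector-lifting lemma, assume in addition that S is a principal ideal domain. Then the nonzero eigenvector F ∈ N ⊗_A S with (h ⊗ 1)F = (1 ⊗ φ(h))F for all h ∈ T can be chosen so that its image F(x) in N ⊗_A (S/m_x) is nonzero for every maximal ideal m_x of S. -/

import Mathlib

open TensorProduct

section Aux

variable {S : Type*} [CommRing S] {R : Type*} [CommRing R] [Algebra S R]
variable {M : Type*} [AddCommGroup M] [Module S M]

lemma aux_tmul_one_eq_zero_iff {ι : Type*} [Fintype ι] (b : Module.Basis ι S M) (x : M) :
    ((1 : R) ⊗ₜ[S] x = (0 : R ⊗[S] M)) ↔ ∀ i, algebraMap S R (b.repr x i) = 0 := by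
  have h0 : ∀ i, (b.baseChange R).repr ((1 : R) ⊗ₜ[S] x) i = algebraMap S R (b.repr x i) := by
    intro i
    rw [Module.Basis.baseChange_repr_tmul, Algebra.algebraMap_eq_smul_one]
  constructor
  · intro h i
    rw [← h0 i, h]
    simp
  · intro h
    have hz : (b.baseChange R).repr ((1 : R) ⊗ₜ[S] x) = 0 := by
      ext i
      simp [h0 i, h i]
    simpa using (LinearEquiv.map_eq_zero_iff _).mp hz

lemma aux_tmul_one_eq_zero {ι : Type*} [Fintype ι] (b : Module.Basis ι S M)
    (hinj : Function.Injective (algebraMap S R)) {x : M}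
    (h : (1 : R) ⊗ₜ[S] x = (0 : R ⊗[S] M)) : x = 0 := by
  have h1 := (aux_tmul_one_eq_zero_iff b x).mp h
  have hrepr : b.repr x = 0 := by
    ext i
    have h2 : algebraMap S R (b.repr x i) = algebraMap S R 0 := by
      simpa using h1 i
    simpa using hinj h2
  simpa using (LinearEquiv.map_eq_zero_iff _).mp hrepr

end Aux

lemma aux_exists_smul_leftInverse {S : Type*} [CommRing S] [IsDomain S]
    {M M' : Type*} [AddCommGroup M] [Module S M] [AddCommGroup M'] [Module S M']
    [Module.Free S M] [Module.Finite S M] [Module.Free S M'] [Module.Finite S M']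
    (f : M →ₗ[S] M') (hf : Function.Injective f) :
    ∃ (s : S) (g : M' →ₗ[S] M), s ≠ 0 ∧ g ∘ₗ f = s • LinearMap.id := by
  classical
  set K := FractionRing S
  have hfK : Function.Injective (f.baseChange K) := by
    have h : (f.baseChange K : K ⊗[S] M → K ⊗[S] M') = f.lTensor K :=
      LinearMap.baseChange_eq_ltensor f
    rw [h]
    exact Module.Flat.lTensor_preserves_injective_linearMap f hf
  obtain ⟨gK, hgK⟩ := LinearMap.exists_leftInverse_of_injective (f.baseChange K)
    (LinearMap.ker_eq_bot.mpr hfK)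
  let bM := Module.Free.chooseBasis S M
  let bM' := Module.Free.chooseBasis S M'
  set α : Module.Free.ChooseBasisIndex S M' × Module.Free.ChooseBasisIndex S M → K :=
    fun p => (bM.baseChange K).repr (gK ((1 : K) ⊗ₜ[S] bM' p.1)) p.2 with hα
  obtain ⟨s, hs⟩ := IsLocalization.exist_integer_multiples_of_finite (nonZeroDivisors S) α
  choose num hnum using hs
  let g : M' →ₗ[S] M := bM'.constr ℕ fun k => ∑ j, num (k, j) • bM j
  have key : ∀ y : M', (1 : K) ⊗ₜ[S] (g y) = (s : S) • gK ((1 : K) ⊗ₜ[S] y) := by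
    intro y
    have hmaps : (TensorProduct.mk S K M 1) ∘ₗ g
        = (s : S) • ((gK.restrictScalars S) ∘ₗ (TensorProduct.mk S K M' 1)) := by
      refine Module.Basis.ext bM' fun k => ?_
      have hgk : g (bM' k) = ∑ j, num (k, j) • bM j := by
        simp [g, Module.Basis.constr_basis]
      have hrepr : gK ((1 : K) ⊗ₜ[S] bM' k)
          = ∑ j, α (k, j) • ((1 : K) ⊗ₜ[S] bM j) := by
        have h2 := (bM.baseChange K).sum_repr (gK ((1 : K) ⊗ₜ[S] bM' k))
        simp only [Module.Basis.baseChange_apply] at h2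
        exact h2.symm
      simp only [LinearMap.comp_apply, LinearMap.smul_apply, LinearMap.restrictScalars_apply,
        TensorProduct.mk_apply, hgk, hrepr]
      rw [tmul_sum, Finset.smul_sum]
      refine Finset.sum_congr rfl fun j _ => ?_
      rw [tmul_smul, ← smul_assoc, ← hnum (k, j), algebraMap_smul]
    have := LinearMap.congr_fun hmaps y
    simpa using this
  have htmul_inj : ∀ x : M, (1 : K) ⊗ₜ[S] x = 0 → x = 0 :=
    fun x h => aux_tmul_one_eq_zero bM (IsFractionRing.injective S K) h
  refine ⟨(s : S), g, nonZeroDivisors.coe_ne_zero s, ?_⟩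
  refine Module.Basis.ext bM fun i => ?_
  have h1 : (1 : K) ⊗ₜ[S] (g (f (bM i))) = (1 : K) ⊗ₜ[S] ((s : S) • bM i) := by
    rw [key]
    have h2 : (1 : K) ⊗ₜ[S] (f (bM i)) = f.baseChange K ((1 : K) ⊗ₜ[S] bM i) := by simp
    rw [h2]
    have h3 := LinearMap.congr_fun hgK ((1 : K) ⊗ₜ[S] bM i)
    simp only [LinearMap.comp_apply, LinearMap.id_apply] at h3
    rw [h3, tmul_smul]
  have h4 : (1 : K) ⊗ₜ[S] (g (f (bM i)) - (s : S) • bM i) = 0 := by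
    rw [tmul_sub, h1, sub_self]
  have h5 := htmul_inj _ h4
  have h6 : g (f (bM i)) = (s : S) • bM i := by
    rwa [sub_eq_zero] at h5
  simpa using h6

set_option maxHeartbeats 1600000 in
set_option synthInstance.maxHeartbeats 400000 in
/-- Deligne–Serre style lifting lemma, refined version over a principal ideal domain:
in the setting of the eigenvector-lifting lemma, if moreover `S` is a principal ideal
domain, then the nonzero eigenvector `F ∈ S ⊗[A] N` with `(h ⊗ 1) F = (1 ⊗ φ(h)) F` for
all `h ∈ T` can be chosen so that its image `F(x)` in `(S ⧸ m) ⊗[A] N` is nonzero for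
every maximal ideal `m` of `S`. -/
theorem exists_global_eigenvector_nonvanishing
    (L : Type*) [Field L] [IsAlgClosed L]
    (A : Type*) [CommRing A] [Algebra L A] [Algebra.FiniteType L A]
    (T : Type*) [CommRing T] [Algebra L T] [Algebra A T] [IsScalarTower L A T]
    [Module.Finite A T]
    (S : Type*) [CommRing S] [IsDomain S] [IsPrincipalIdealRing S] [Algebra L S]
    [Algebra.FiniteType L S] [Algebra A S] [IsScalarTower L A S]
    (N : Type*) [AddCommGroup N] [Module A N] [Module.Finite A N] [Module.Projective A N]
    (ρ : T →ₐ[A] Module.End A N)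
    (φ : T →ₐ[L] S)
    (hcomp : ∀ a : A, algebraMap A S a = φ (algebraMap A T a))
    (hx : ∀ m : Ideal S, m.IsMaximal →
      ∃ fx : (S ⧸ m) ⊗[A] N, fx ≠ 0 ∧
        ∀ h : T, LinearMap.lTensor (S ⧸ m) (ρ h : N →ₗ[A] N) fx
          = Ideal.Quotient.mk m (φ h) • fx) :
    ∃ F : S ⊗[A] N, F ≠ 0 ∧
      (∀ h : T, LinearMap.lTensor S (ρ h : N →ₗ[A] N) F = φ h • F) ∧
      ∀ m : Ideal S, m.IsMaximal →
        LinearMap.rTensor N (Ideal.Quotient.mkₐ A m).toLinearMap F ≠ 0 := by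
  classical
  -- the base-changed module is finite free over the PID `S`
  haveI : Module.IsTorsionFree S (S ⊗[A] N) := by
    obtain ⟨i, hi⟩ := Module.projective_def.mp
      (inferInstance : Module.Projective S (S ⊗[A] N))
    exact Function.Injective.moduleIsTorsionFree i hi.injective
      (fun c x => map_smul i c x)
  haveI : Module.Free S (S ⊗[A] N) := Module.free_of_finite_type_torsion_free'
  -- Jacobson property of S
  haveI : IsJacobsonRing S := isJacobsonRing_of_finiteType (A := L)
  have exists_max : ∀ s : S, s ≠ 0 → ∃ m : Ideal S, m.IsMaximal ∧ s ∉ m := by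
    intro s hs
    by_contra hcon
    push_neg at hcon
    have hmem : s ∈ (⊥ : Ideal S).jacobson :=
      Submodule.mem_sInf.mpr fun J hJ => hcon J hJ.2
    rw [(inferInstance : IsJacobsonRing S).out (Ideal.bot_prime).isRadical] at hmem
    exact hs (Ideal.mem_bot.mp hmem)
  -- generators of T as an A-module
  obtain ⟨tfin, htspan⟩ := Module.Finite.fg_top (R := A) (M := T)
  -- the family of "eigen-difference" operators
  set D : T → ((S ⊗[A] N) →ₗ[S] (S ⊗[A] N)) :=
    fun h => LinearMap.baseChange S (ρ h : N →ₗ[A] N) - φ h • LinearMap.id with hD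
  -- bridge between the two tensor products over S/m
  have main_bridge : ∀ (m : Ideal S) (w : S ⊗[A] N),
      (AlgebraTensorModule.cancelBaseChange A S (S ⧸ m) (S ⧸ m) N) ((1 : S ⧸ m) ⊗ₜ[S] w)
        = LinearMap.rTensor N (Ideal.Quotient.mkₐ A m).toLinearMap w := by
    intro m w
    induction w using TensorProduct.induction_on with
    | zero => simp
    | tmul s n =>
      simp [AlgebraTensorModule.cancelBaseChange_tmul, LinearMap.rTensor_tmul,
        Algebra.smul_def, Ideal.Quotient.algebraMap_eq]
    | add x y ihx ihy =>
      rw [tmul_add, map_add, map_add, ihx, ihy]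
  have op_bridge : ∀ (m : Ideal S) (h : T) (w : (S ⧸ m) ⊗[S] (S ⊗[A] N)),
      (AlgebraTensorModule.cancelBaseChange A S (S ⧸ m) (S ⧸ m) N)
          ((LinearMap.baseChange (S ⧸ m) (D h)) w)
        = LinearMap.lTensor (S ⧸ m) (ρ h : N →ₗ[A] N)
            ((AlgebraTensorModule.cancelBaseChange A S (S ⧸ m) (S ⧸ m) N) w)
          - Ideal.Quotient.mk m (φ h)
            • ((AlgebraTensorModule.cancelBaseChange A S (S ⧸ m) (S ⧸ m) N) w) := by
    intro m h w
    induction w using TensorProduct.induction_on with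
    | zero => simp
    | tmul c z =>
      induction z using TensorProduct.induction_on with
      | zero => simp
      | tmul s n =>
        rw [LinearMap.baseChange_tmul]
        rw [hD]
        simp only [LinearMap.sub_apply, LinearMap.smul_apply, LinearMap.id_apply,
          LinearMap.baseChange_tmul]
        rw [smul_tmul', tmul_sub, map_sub]
        simp only [AlgebraTensorModule.cancelBaseChange_tmul, LinearMap.lTensor_tmul]
        rw [smul_tmul']
        congr 2
        rw [smul_eq_mul, mul_smul, ← Ideal.Quotient.algebraMap_eq, algebraMap_smul]
      | add z1 z2 ih1 ih2 =>
        rw [tmul_add, map_add, map_add, ih1, ih2, map_add]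
        rw [map_add, smul_add]
        abel
    | add x y ihx ihy =>
      rw [map_add, map_add, ihx, ihy, map_add, map_add, smul_add]
      abel
  -- the stacked operator indexed by the generators is not injective
  let Φ : (S ⊗[A] N) →ₗ[S] (↥tfin → S ⊗[A] N) := LinearMap.pi fun i => D (i : T)
  have hΦ : ¬ Function.Injective Φ := by
    intro hinj
    obtain ⟨s, g, hs, hgf⟩ := aux_exists_smul_leftInverse Φ hinj
    obtain ⟨m, hm, hsm⟩ := exists_max s hs
    haveI := hm
    obtain ⟨fx, hfx0, hfxeig⟩ := hx m hm
    set e := AlgebraTensorModule.cancelBaseChange A S (S ⧸ m) (S ⧸ m) N with he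
    set v := e.symm fx with hv
    have hev : e v = fx := e.apply_symm_apply fx
    have hvne : v ≠ 0 := fun h0 => hfx0 (by rw [← hev, h0, map_zero])
    have hDv : ∀ h : T, LinearMap.baseChange (S ⧸ m) (D h) v = 0 := by
      intro h
      have hb := op_bridge m h v
      rw [hev, hfxeig h, sub_self] at hb
      exact (LinearEquiv.map_eq_zero_iff e).mp hb
    -- decompose g ∘ Φ into a sum of compositions
    set gi : ↥tfin → ((S ⊗[A] N) →ₗ[S] (S ⊗[A] N)) :=
      fun i => g ∘ₗ LinearMap.single S (fun _ : ↥tfin => S ⊗[A] N) i with hgi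
    have hmap : (∑ i : ↥tfin, (gi i) ∘ₗ D (i : T))
        = (s : S) • (LinearMap.id : (S ⊗[A] N) →ₗ[S] (S ⊗[A] N)) := by
      have hgf' := hgf
      apply LinearMap.ext
      intro x
      have h1 : Φ x = ∑ i : ↥tfin, Pi.single (i : ↥tfin) (D (i : T) x) := by
        exact (Finset.univ_sum_single (f := fun i : ↥tfin => D (i : T) x)).symm
      have h2 : g (Φ x) = s • x := by
        have := LinearMap.congr_fun hgf' x
        simpa using this
      calc (∑ i : ↥tfin, (gi i) ∘ₗ D (i : T)) x
          = ∑ i : ↥tfin, g (LinearMap.single S (fun _ : ↥tfin => S ⊗[A] N) i (D (i : T) x)) := by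
            simp [hgi]
        _ = g (∑ i : ↥tfin, Pi.single (i : ↥tfin) (D (i : T) x)) := by
            rw [map_sum]
            rfl
        _ = s • x := by rw [← h1, h2]
    -- base change the identity to S/m and evaluate at v
    have hbc : LinearMap.baseChange (S ⧸ m) (∑ i : ↥tfin, (gi i) ∘ₗ D (i : T))
        = ∑ i : ↥tfin, LinearMap.baseChange (S ⧸ m) ((gi i) ∘ₗ D (i : T)) :=
      map_sum (LinearMap.baseChangeHom S (S ⧸ m) _ _) _ _
    have hLHS : LinearMap.baseChange (S ⧸ m) (∑ i : ↥tfin, (gi i) ∘ₗ D (i : T)) v = 0 := by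
      rw [hbc]
      rw [LinearMap.sum_apply]
      refine Finset.sum_eq_zero fun i _ => ?_
      rw [LinearMap.baseChange_comp, LinearMap.comp_apply, hDv, map_zero]
    have hRHS : LinearMap.baseChange (S ⧸ m)
        ((s : S) • (LinearMap.id : (S ⊗[A] N) →ₗ[S] (S ⊗[A] N))) v
          = Ideal.Quotient.mk m s • v := by
      rw [LinearMap.baseChange_smul, LinearMap.baseChange_id, LinearMap.smul_apply,
        LinearMap.id_apply, ← Ideal.Quotient.algebraMap_eq, algebraMap_smul]
    rw [hmap, hRHS] at hLHS
    obtain ⟨t, i0, hi0, hts⟩ := hm.exists_inv hsm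
    have hunit : Ideal.Quotient.mk m t * Ideal.Quotient.mk m s = 1 := by
      have hts' : t * s = 1 - i0 := by linear_combination hts
      rw [← map_mul, hts', map_sub, Ideal.Quotient.eq_zero_iff_mem.mpr hi0, sub_zero, map_one]
    have hvzero : v = 0 := by
      calc v = (Ideal.Quotient.mk m t * Ideal.Quotient.mk m s) • v := by rw [hunit, one_smul]
        _ = Ideal.Quotient.mk m t • (Ideal.Quotient.mk m s • v) := mul_smul _ _ _
        _ = 0 := by rw [hLHS, smul_zero]
    exact hvne hvzero
  -- extract a nonzero vector killed by all the D i, i ∈ tfin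
  rw [Function.not_injective_iff] at hΦ
  obtain ⟨a, bb, hab, hneq⟩ := hΦ
  set F0 : S ⊗[A] N := a - bb with hF0
  have hF0ne : F0 ≠ 0 := sub_ne_zero.mpr hneq
  have hF0D : ∀ i : ↥tfin, D (i : T) F0 = 0 := by
    intro i
    have h1 : Φ F0 = 0 := by rw [hF0, map_sub, hab, sub_self]
    have := congrFun (congrArg (fun f => (f : ↥tfin → S ⊗[A] N)) h1) i
    simpa [Φ, LinearMap.pi_apply] using this
  -- divide by the gcd of the coordinates
  set b := Module.Free.chooseBasis S (S ⊗[A] N) with hb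
  obtain ⟨d, hd⟩ :=
    (IsPrincipalIdealRing.principal (Ideal.span (Set.range fun i => b.repr F0 i))).principal
  have hci : ∀ i, ∃ e0 : S, e0 * d = b.repr F0 i := by
    intro i
    have hmem : b.repr F0 i ∈ Ideal.span (Set.range fun i => b.repr F0 i) :=
      Ideal.subset_span ⟨i, rfl⟩
    rw [hd] at hmem
    exact Ideal.mem_span_singleton'.mp hmem
  choose ecoef hecoef using hci
  set F' : S ⊗[A] N := ∑ i, ecoef i • b i with hF'
  have hdF' : d • F' = F0 := by
    rw [hF', Finset.smul_sum]
    calc (∑ i, d • ecoef i • b i) = ∑ i, b.repr F0 i • b i := by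
          refine Finset.sum_congr rfl fun i _ => ?_
          rw [smul_smul, mul_comm, hecoef]
      _ = F0 := b.sum_repr F0
  have hdne : d ≠ 0 := fun h0 => hF0ne (by rw [← hdF', h0, zero_smul])
  have hF'ne : F' ≠ 0 := fun h0 => hF0ne (by rw [← hdF', h0, smul_zero])
  have hF'repr : ∀ i, b.repr F' i = ecoef i := by
    intro i
    rw [hF']
    exact congrFun (b.repr_sum_self ecoef) i
  have hF'D : ∀ i : ↥tfin, D (i : T) F' = 0 := by
    intro i
    have h1 : d • D (i : T) F' = 0 := by rw [← map_smul, hdF', hF0D i]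
    rcases smul_eq_zero.mp h1 with h | h
    · exact absurd h hdne
    · exact h
  -- primitivity: for every maximal ideal some coordinate avoids it
  have hprim : ∀ m : Ideal S, m.IsMaximal → ∃ i, ecoef i ∉ m := by
    intro m hm
    by_contra hcon
    push_neg at hcon
    have hdI : d ∈ Ideal.span (Set.range fun i => b.repr F0 i) := by
      rw [hd]
      exact Ideal.subset_span rfl
    obtain ⟨u, hu⟩ := (Submodule.mem_span_range_iff_exists_fun S).mp hdI
    have h2 : ∑ i, u i * (ecoef i * d) = d := by
      simpa only [hecoef, smul_eq_mul] using hu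
    have h3 : d * (1 - ∑ i, u i * ecoef i) = 0 := by
      have h2' : d * (∑ i, u i * ecoef i) = d := by
        rw [Finset.mul_sum]
        calc (∑ i, d * (u i * ecoef i))
            = ∑ i, u i * (ecoef i * d) := Finset.sum_congr rfl fun i _ => by ring
          _ = d := h2
      rw [mul_sub, mul_one, h2', sub_self]
    have h4 : (1 : S) - ∑ i, u i * ecoef i = 0 :=
      (mul_eq_zero.mp h3).resolve_left hdne
    have h5 : (1 : S) ∈ m := by
      have : ∑ i, u i * ecoef i ∈ m :=
        Ideal.sum_mem m fun i _ => m.mul_mem_left (u i) (hcon i)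
      have h6 : (1 : S) = ∑ i, u i * ecoef i := by linear_combination h4
      rw [h6]
      exact this
    exact hm.ne_top (Ideal.eq_top_of_isUnit_mem m h5 isUnit_one)
  -- the eigen-property extends from the spanning set to all of T
  have heig : ∀ h : T, LinearMap.lTensor S (ρ h : N →ₗ[A] N) F' = φ h • F' := by
    have hgen : ∀ x ∈ (↑tfin : Set T),
        LinearMap.lTensor S (ρ x : N →ₗ[A] N) F' = φ x • F' := by
      intro x hxmem
      have h1 := hF'D ⟨x, hxmem⟩
      rw [hD] at h1
      have h2 : LinearMap.baseChange S (ρ x : N →ₗ[A] N) F' = φ x • F' := by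
        have := sub_eq_zero.mp (by simpa [LinearMap.sub_apply] using h1)
        simpa using this
      rw [← h2]
      exact (congrFun (LinearMap.baseChange_eq_ltensor (ρ x : N →ₗ[A] N)) F').symm
    intro h
    have hmem : h ∈ Submodule.span A (↑tfin : Set T) := by rw [htspan]; trivial
    induction hmem using Submodule.span_induction with
    | mem x hxmem => exact hgen x hxmem
    | zero => simp
    | add x y _ _ ihx ihy =>
      rw [map_add]
      have hlt : LinearMap.lTensor S ((ρ x : N →ₗ[A] N) + (ρ y : N →ₗ[A] N))
          = LinearMap.lTensor S (ρ x : N →ₗ[A] N) + LinearMap.lTensor S (ρ y : N →ₗ[A] N) :=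
        map_add (LinearMap.lTensorHom S) _ _
      rw [hlt, LinearMap.add_apply, ihx, ihy, map_add, add_smul]
    | smul a x _ ihx =>
      have hρ : (ρ (a • x) : N →ₗ[A] N) = a • (ρ x : N →ₗ[A] N) := by
        have := map_smul ρ.toLinearMap a x
        simp only [AlgHom.toLinearMap_apply] at this
        exact this
      rw [hρ]
      have hlt : LinearMap.lTensor S (a • (ρ x : N →ₗ[A] N))
          = a • LinearMap.lTensor S (ρ x : N →ₗ[A] N) :=
        map_smul (LinearMap.lTensorHom S) a _
      rw [hlt, LinearMap.smul_apply, ihx]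
      have hφ : φ (a • x) = algebraMap A S a * φ x := by
        rw [Algebra.smul_def, map_mul, ← hcomp a]
      rw [hφ, mul_smul, algebraMap_smul]
  -- conclude
  refine ⟨F', hF'ne, heig, ?_⟩
  intro m hm hzero
  have h1 : (1 : S ⧸ m) ⊗ₜ[S] F' = 0 := by
    apply (LinearEquiv.map_eq_zero_iff
      (AlgebraTensorModule.cancelBaseChange A S (S ⧸ m) (S ⧸ m) N)).mp
    rw [main_bridge m F', hzero]
  have h2 := (aux_tmul_one_eq_zero_iff b F').mp h1
  obtain ⟨i, hi⟩ := hprim m hm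
  apply hi
  have h3 := h2 i
  rw [hF'repr i, Ideal.Quotient.algebraMap_eq, Ideal.Quotient.eq_zero_iff_mem] at h3
  exact h3
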